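/- arXiv:1210.8326 — 2 statements merged into one kernel-verified Lean document; each statement's English description precedes it below -/
import Mathlib

section
/- Let M be even, let s_1 < s_2 < ... < s_M be real numbers, let ρ > 0, let p ∈ {0,1}^M be a pattern of Hamming weight M/2, and let β_1 ≤ β_2 ≤ ... ≤ β_{M-1} be arbitrary real thresholds (not necessarily the midpoints between consecutive constellation points), with β_0 = -∞ and β_M = +∞. Let Y = s_i + η where η is a zero-mean Gaussian random variable with variance 1/(2ρ), and let the demodulator output the bit p_k when β_{k-1} < Y ≤ β_k. Then (1/M) ∑_{i=1}^{M} Pr{output bit ≠ p_i | transmitted point is s_i} = 1/2 + (1/M) ∑_{i=1}^{M} ∑_{k=1}^{M-1} g_{i,k} · Q((β_k − s_i)·√(2ρ)), where g_{i,k} = (p_{k+1} − p_k)(1 − 2 p_i) with bits treated as integers. -/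
open MeasureTheory

/-- The Gaussian Q-function `Q(x) = (1/√(2π)) ∫_x^∞ e^{-t²/2} dt`. -/
noncomputable def Qfun (x : ℝ) : ℝ :=
  ∫ t in Set.Ioi x, (Real.sqrt (2 * Real.pi))⁻¹ * Real.exp (-t ^ 2 / 2)

/-- The Gaussian density with mean `μ` and variance `1/(2ρ)`
(the AWGN channel transition density at SNR `ρ`). -/
noncomputable def gaussDens (ρ μ y : ℝ) : ℝ :=
  Real.sqrt (ρ / Real.pi) * Real.exp (-ρ * (y - μ) ^ 2)

/-- The `k`-th decision region (for `k = 1, …, M`) of a threshold demodulator with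
thresholds `β 1 ≤ … ≤ β (M-1)`, together with `β 0 = -∞` and `β M = +∞`:
region `k` is `(β (k-1), β k]`. -/
def region (β : ℕ → ℝ) (M k : ℕ) : Set ℝ :=
  if k = 1 then Set.Iic (β 1)
  else if k = M then Set.Ioi (β (M - 1))
  else Set.Ioc (β (k - 1)) (β k)

/-- A bit viewed as a real number. -/
def bitR (b : Bool) : ℝ := if b then 1 else 0

noncomputable def stdG (t : ℝ) : ℝ := (Real.sqrt (2 * Real.pi))⁻¹ * Real.exp (-t ^ 2 / 2)

lemma Qfun_eq (x : ℝ) : Qfun x = ∫ t in Set.Ioi x, stdG t := rfl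

lemma my_integral_comp_add_right_Ioi (g : ℝ → ℝ) (a d : ℝ) :
    ∫ x in Set.Ioi a, g (x + d) = ∫ x in Set.Ioi (a + d), g x := by
  rw [← integral_indicator measurableSet_Ioi, ← integral_indicator measurableSet_Ioi,
    ← integral_add_right_eq_self (fun x => (Set.Ioi (a + d)).indicator g x) d]
  congr 1
  ext x
  simp [Set.indicator_apply, Set.mem_Ioi, add_lt_add_iff_right]

lemma gaussDens_eq (ρ μ : ℝ) (hρ : 0 < ρ) (y : ℝ) :
    gaussDens ρ μ y = Real.sqrt (2 * ρ) * stdG ((y + -μ) * Real.sqrt (2 * ρ)) := by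
  have hπ : (0:ℝ) < Real.pi := Real.pi_pos
  unfold gaussDens stdG
  have hsq : -((y + -μ) * Real.sqrt (2 * ρ)) ^ 2 / 2 = -ρ * (y - μ) ^ 2 := by
    rw [mul_pow, Real.sq_sqrt (by positivity)]; ring
  rw [hsq]
  have hc : Real.sqrt (ρ / Real.pi) = Real.sqrt (2 * ρ) * (Real.sqrt (2 * Real.pi))⁻¹ := by
    rw [← Real.sqrt_inv, ← Real.sqrt_mul (by positivity)]
    congr 1
    field_simp
  rw [hc, mul_assoc]

lemma gaussDens_integrable (ρ μ : ℝ) (hρ : 0 < ρ) : Integrable (gaussDens ρ μ) := by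
  unfold gaussDens
  exact ((integrable_exp_neg_mul_sq hρ).comp_sub_right μ).const_mul _

lemma gaussDens_total (ρ μ : ℝ) (hρ : 0 < ρ) : ∫ y, gaussDens ρ μ y = 1 := by
  have hπ : (0:ℝ) < Real.pi := Real.pi_pos
  unfold gaussDens
  rw [integral_const_mul]
  rw [integral_sub_right_eq_self (μ := volume) (fun y => Real.exp (-ρ * y ^ 2)) μ,
    integral_gaussian, ← Real.sqrt_mul (by positivity),
    show ρ / Real.pi * (Real.pi / ρ) = 1 by field_simp, Real.sqrt_one]

lemma gauss_Ioi (ρ μ a : ℝ) (hρ : 0 < ρ) :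
    ∫ y in Set.Ioi a, gaussDens ρ μ y = Qfun ((a - μ) * Real.sqrt (2 * ρ)) := by
  have hc : 0 < Real.sqrt (2 * ρ) := Real.sqrt_pos.mpr (by linarith)
  calc ∫ y in Set.Ioi a, gaussDens ρ μ y
      = ∫ y in Set.Ioi a, Real.sqrt (2*ρ) * stdG ((y + -μ) * Real.sqrt (2*ρ)) := by
        simp_rw [gaussDens_eq ρ μ hρ]
    _ = Real.sqrt (2*ρ) * ∫ y in Set.Ioi a, stdG ((y + -μ) * Real.sqrt (2*ρ)) :=
        integral_const_mul _ _
    _ = Real.sqrt (2*ρ) * ∫ x in Set.Ioi (a + -μ), stdG (x * Real.sqrt (2*ρ)) := by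
        rw [my_integral_comp_add_right_Ioi (fun x => stdG (x * Real.sqrt (2*ρ)))]
    _ = Real.sqrt (2*ρ) * ((Real.sqrt (2*ρ))⁻¹ • ∫ x in Set.Ioi ((a + -μ) * Real.sqrt (2*ρ)), stdG x) := by
        rw [MeasureTheory.integral_comp_mul_right_Ioi stdG _ hc]
    _ = Qfun ((a - μ) * Real.sqrt (2*ρ)) := by
        rw [smul_eq_mul, Qfun_eq, ← mul_assoc, mul_inv_cancel₀ hc.ne', one_mul, sub_eq_add_neg]

lemma gauss_Iic (ρ μ a : ℝ) (hρ : 0 < ρ) :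
    ∫ y in Set.Iic a, gaussDens ρ μ y = 1 - Qfun ((a - μ) * Real.sqrt (2 * ρ)) := by
  have h := integral_add_compl (measurableSet_Iic (a := a)) (gaussDens_integrable ρ μ hρ)
  rw [Set.compl_Iic, gauss_Ioi ρ μ a hρ, gaussDens_total ρ μ hρ] at h
  linarith

lemma gauss_Ioc (ρ μ a b : ℝ) (hρ : 0 < ρ) (hab : a ≤ b) :
    ∫ y in Set.Ioc a b, gaussDens ρ μ y
      = Qfun ((a - μ) * Real.sqrt (2*ρ)) - Qfun ((b - μ) * Real.sqrt (2*ρ)) := by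
  have hu : Set.Ioc a b ∪ Set.Ioi b = Set.Ioi a := Set.Ioc_union_Ioi_eq_Ioi hab
  have hd : Disjoint (Set.Ioc a b) (Set.Ioi b) :=
    Set.disjoint_left.mpr fun x hx hx' => absurd hx.2 (not_le.mpr hx')
  have h := setIntegral_union hd measurableSet_Ioi
    ((gaussDens_integrable ρ μ hρ).integrableOn) ((gaussDens_integrable ρ μ hρ).integrableOn)
  rw [hu, gauss_Ioi ρ μ a hρ, gauss_Ioi ρ μ b hρ] at h
  linarith

lemma abel_sum (e A : ℕ → ℝ) : ∀ M : ℕ, 1 ≤ M →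
    ∑ k ∈ Finset.Icc 1 M, e k * (A (k-1) - A k)
      = e 1 * A 0 - e M * A M + ∑ k ∈ Finset.Icc 1 (M-1), (e (k+1) - e k) * A k := by
  intro M
  induction M with
  | zero => omega
  | succ n ih =>
    intro _
    rcases Nat.eq_zero_or_pos n with hn | hn
    · subst hn; simp; ring
    · rw [Finset.sum_Icc_succ_top (by omega : 1 ≤ n + 1), ih hn]
      simp only [Nat.add_sub_cancel]
      obtain ⟨m, rfl⟩ : ∃ m, n = m + 1 := ⟨n - 1, by omega⟩
      rw [Finset.sum_Icc_succ_top (by omega : 1 ≤ m + 1)]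
      simp only [Nat.add_sub_cancel]
      ring

/-!
STATEMENT 2: pattern bit-error rate expression for arbitrary ordered thresholds.

`M` is even, `s 1 < s 2 < … < s M` are the constellation points, `ρ > 0` is the
SNR, and `p` is a pattern of Hamming weight `M/2`.  The thresholds
`β 1 ≤ β 2 ≤ … ≤ β (M-1)` are arbitrary ordered reals (not necessarily the
midpoints between consecutive constellation points).  Transmitting `s i`, the demodulator
outputs the bit `p k` when `Y = s i + η` falls in the `k`-th region, so the
probability of a bit error given `X = s i` is
`∑_{k : p k ≠ p i} ∫_{region k} gaussDens ρ (s i) y dy`.  The pattern BER,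
averaged over the `M` equiprobable points, equals
`1/2 + (1/M) ∑_i ∑_k g_{i,k} Q((β k - s i)√(2ρ))` with
`g_{i,k} = (p_{k+1} - p_k)(1 - 2 p_i)`.
-/
theorem pattern_ber_general_thresholds (M : ℕ) (hM : Even M) (hM0 : 0 < M)
    (s : ℕ → ℝ) (hs : ∀ k ∈ Finset.Icc 1 (M - 1), s k < s (k + 1))
    (ρ : ℝ) (hρ : 0 < ρ)
    (p : ℕ → Bool)
    (hp : ((Finset.Icc 1 M).filter (fun i => p i = true)).card = M / 2)
    (β : ℕ → ℝ) (hβ : ∀ k ∈ Finset.Icc 1 (M - 2), β k ≤ β (k + 1)) :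
    (M : ℝ)⁻¹ * ∑ i ∈ Finset.Icc 1 M, ∑ k ∈ Finset.Icc 1 M,
        (if p k ≠ p i then ∫ y in region β M k, gaussDens ρ (s i) y else 0)
      = 1 / 2 + (M : ℝ)⁻¹ * ∑ i ∈ Finset.Icc 1 M, ∑ k ∈ Finset.Icc 1 (M - 1),
          (bitR (p (k + 1)) - bitR (p k)) * (1 - 2 * bitR (p i)) *
            Qfun ((β k - s i) * Real.sqrt (2 * ρ)) := by
  obtain ⟨m, hm⟩ := hM
  have hm1 : 1 ≤ m := by omega
  have hM2 : 2 ≤ M := by omega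
  -- per-point inner-sum computation
  have key : ∀ i, (∑ k ∈ Finset.Icc 1 M,
        (if p k ≠ p i then ∫ y in region β M k, gaussDens ρ (s i) y else 0))
      = (if p 1 ≠ p i then (1:ℝ) else 0)
        + ∑ k ∈ Finset.Icc 1 (M-1), (bitR (p (k+1)) - bitR (p k)) * (1 - 2 * bitR (p i)) *
            Qfun ((β k - s i) * Real.sqrt (2 * ρ)) := by
    intro i
    set A : ℕ → ℝ := fun k => if k = 0 then 1 else if M ≤ k then 0
        else Qfun ((β k - s i) * Real.sqrt (2 * ρ)) with hA
    set e : ℕ → ℝ := fun k => if p k ≠ p i then (1:ℝ) else 0 with he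
    have hreg : ∀ k ∈ Finset.Icc 1 M, (∫ y in region β M k, gaussDens ρ (s i) y)
        = A (k-1) - A k := by
      intro k hk
      simp only [Finset.mem_Icc] at hk
      unfold region
      by_cases h1 : k = 1
      · subst h1
        rw [if_pos rfl, gauss_Iic _ _ _ hρ]
        have hA0 : A 0 = 1 := by simp [hA]
        have hA1 : A 1 = Qfun ((β 1 - s i) * Real.sqrt (2 * ρ)) := by
          simp only [hA]
          rw [if_neg (by omega), if_neg (by omega)]
        rw [hA0, hA1]
      · rw [if_neg h1]
        by_cases h2 : k = M
        · rw [if_pos h2, gauss_Ioi _ _ _ hρ]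
          have hAM : A k = 0 := by
            simp only [hA]; rw [if_neg (by omega), if_pos (by omega)]
          have hAM1 : A (k-1) = Qfun ((β (k-1) - s i) * Real.sqrt (2 * ρ)) := by
            simp only [hA]; rw [if_neg (by omega), if_neg (by omega)]
          rw [hAM, hAM1, sub_zero, show M - 1 = k - 1 by omega]
        · rw [if_neg h2]
          have hle : β (k-1) ≤ β k := by
            have := hβ (k-1) (Finset.mem_Icc.mpr ⟨by omega, by omega⟩)
            rwa [show k - 1 + 1 = k by omega] at this
          rw [gauss_Ioc _ _ _ _ hρ hle]
          have h3 : A (k-1) = Qfun ((β (k-1) - s i) * Real.sqrt (2 * ρ)) := by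
            simp only [hA]; rw [if_neg (by omega), if_neg (by omega)]
          have h4 : A k = Qfun ((β k - s i) * Real.sqrt (2 * ρ)) := by
            simp only [hA]; rw [if_neg (by omega), if_neg (by omega)]
          rw [h3, h4]
    have step1 : (∑ k ∈ Finset.Icc 1 M,
          (if p k ≠ p i then ∫ y in region β M k, gaussDens ρ (s i) y else 0))
        = ∑ k ∈ Finset.Icc 1 M, e k * (A (k-1) - A k) := by
      refine Finset.sum_congr rfl fun k hk => ?_
      rw [← hreg k hk]
      simp only [he]
      split_ifs <;> simp
    rw [step1, abel_sum e A M (by omega)]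
    have hA0 : A 0 = 1 := by simp [hA]
    have hAM : A M = 0 := by simp only [hA]; rw [if_neg (by omega), if_pos le_rfl]
    rw [hA0, hAM, mul_one, mul_zero, sub_zero]
    congr 1
    refine Finset.sum_congr rfl fun k hk => ?_
    simp only [Finset.mem_Icc] at hk
    have hAk : A k = Qfun ((β k - s i) * Real.sqrt (2 * ρ)) := by
      simp only [hA]; rw [if_neg (by omega), if_neg (by omega)]
    rw [hAk]
    congr 1
    simp only [he, bitR]
    cases p i <;> cases p k <;> cases p (k+1) <;> norm_num
  simp_rw [key]
  rw [Finset.sum_add_distrib]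
  have hcount : (∑ i ∈ Finset.Icc 1 M, (if p 1 ≠ p i then (1:ℝ) else 0)) = m := by
    rw [Finset.sum_boole]
    have hcard : (Finset.Icc 1 M).card = M := by rw [Nat.card_Icc]; omega
    cases h1 : p 1
    · have hfe : (Finset.Icc 1 M).filter (fun x => false ≠ p x)
          = (Finset.Icc 1 M).filter (fun i => p i = true) := by
        apply Finset.filter_congr
        intro i _
        cases p i <;> simp
      rw [hfe, hp]
      exact Nat.cast_inj.mpr (by omega)
    · have hfe : (Finset.Icc 1 M).filter (fun x => true ≠ p x)
          = (Finset.Icc 1 M).filter (fun i => ¬ (p i = true)) := by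
        apply Finset.filter_congr
        intro i _
        cases p i <;> simp
      rw [hfe]
      have h2 := Finset.card_filter_add_card_filter_not
        (s := Finset.Icc 1 M) (p := fun i => p i = true)
      rw [hp, hcard] at h2
      exact Nat.cast_inj.mpr (by omega)
  rw [hcount]
  have hMr : (M:ℝ) = 2 * m := by rw [hm]; push_cast; ring
  have hm0 : (m:ℝ) ≠ 0 := Nat.cast_ne_zero.mpr (by omega)
  rw [hMr]
  field_simp
  congr 1
  refine Finset.sum_congr rfl fun i _ => Finset.sum_congr rfl fun k _ => ?_
  rw [mul_comm (Real.sqrt (2 * ρ))]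
end

section
/- Let M be divisible by 4. The number of asymmetric (ASY) patterns of length M — binary vectors p ∈ {0,1}^M of Hamming weight M/2 satisfying neither refl(p) = p nor inv(refl(p)) = p — equals C(M, M/2) − C(M/2, M/4) − 2^{M/2}, and this number is divisible by 4. -/
/-- Reflection of a length-`M` bit pattern: `refl(p)_i = p_{M+1-i}` (0-indexed:
`refl(p) i = p (M - 1 - i)`, i.e. `p i.rev`). -/
def prefl (M : ℕ) (p : Fin M → Bool) : Fin M → Bool := fun i => p i.rev

/-- Inversion (coordinatewise binary complement) of a bit pattern. -/
def pinv (M : ℕ) (p : Fin M → Bool) : Fin M → Bool := fun i => !(p i)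

lemma card_wt (k j : ℕ) :
    (Finset.univ.filter (fun f : Fin k → Bool =>
      (Finset.univ.filter (fun i => f i = true)).card = j)).card = k.choose j := by
  have h2 : (Finset.powersetCard j (Finset.univ : Finset (Fin k))).card = k.choose j := by
    rw [Finset.card_powersetCard]; simp
  rw [← h2]
  refine Finset.card_nbij' (fun f => Finset.univ.filter (fun i => f i = true))
    (fun s i => decide (i ∈ s)) ?_ ?_ ?_ ?_
  · intro f hf
    simp only [Finset.mem_filter, Finset.mem_coe, Finset.mem_univ, true_and] at hf
    rw [Finset.mem_coe, Finset.mem_powersetCard]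
    exact ⟨Finset.subset_univ _, hf⟩
  · intro s hs
    rw [Finset.mem_coe, Finset.mem_powersetCard] at hs
    simp only [Finset.mem_filter, Finset.mem_coe, Finset.mem_univ, true_and, decide_eq_true_eq]
    rw [Finset.filter_mem_eq_inter, Finset.univ_inter]
    exact hs.2
  · intro f hf; funext i; simp
  · intro s hs; ext i; simp

lemma wt_split (M n : ℕ) (hMn : M = 2 * n) (p : Fin M → Bool) (hp : ∀ i, p i.rev = p i) :
    (Finset.univ.filter (fun i => p i = true)).card
      = 2 * (Finset.univ.filter
          (fun j : Fin n => p (Fin.castLE (by omega) j) = true)).card := by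
  classical
  set T := Finset.univ.filter (fun i => p i = true) with hT
  have hsplit := Finset.card_filter_add_card_filter_not
    (s := T) (p := fun i => i.val < n)
  have hA : (T.filter (fun i => i.val < n)).card
      = (Finset.univ.filter (fun j : Fin n => p (Fin.castLE (by omega) j) = true)).card := by
    refine Finset.card_bij' (fun i hi => ⟨i.val, ?_⟩)
      (fun j _ => Fin.castLE (by omega) j) ?_ ?_ ?_ ?_
    · exact (Finset.mem_filter.mp hi).2
    · intro a ha
      simp only [hT, Finset.mem_filter, Finset.mem_univ, true_and] at ha ⊢
      have h2 : Fin.castLE (by omega : n ≤ M) ⟨a.val, ha.2⟩ = a := by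
        apply Fin.ext; simp
      rw [h2]
      exact ha.1
    · intro j hj
      simp only [hT, Finset.mem_filter, Finset.mem_univ, true_and] at hj ⊢
      exact ⟨hj, by simp⟩
    · intro a ha; apply Fin.ext; simp
    · intro j hj; apply Fin.ext; simp
  have hB : (T.filter (fun i => ¬ i.val < n)).card
      = (T.filter (fun i => i.val < n)).card := by
    refine Finset.card_nbij' (fun i => i.rev) (fun i => i.rev) ?_ ?_ ?_ ?_
    · intro a ha
      simp only [hT, Finset.mem_filter, Finset.mem_coe, Finset.mem_univ, true_and] at ha ⊢
      have hv : (a.rev : ℕ) = M - (a.val + 1) := rfl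
      have hlt := a.isLt
      exact ⟨by rw [hp a]; exact ha.1, by omega⟩
    · intro a ha
      simp only [hT, Finset.mem_filter, Finset.mem_coe, Finset.mem_univ, true_and] at ha ⊢
      have hv : (a.rev : ℕ) = M - (a.val + 1) := rfl
      have hlt := a.isLt
      exact ⟨by rw [hp a]; exact ha.1, by omega⟩
    · intro a _; exact Fin.rev_rev a
    · intro a _; exact Fin.rev_rev a
  omega

lemma card_RE (M n w : ℕ) (hMn : M = 2 * n) :
    (Finset.univ.filter (fun p : Fin M → Bool =>
      (Finset.univ.filter (fun i => p i = true)).card = 2 * w ∧ prefl M p = p)).card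
      = n.choose w := by
  classical
  rw [← card_wt n w]
  refine Finset.card_nbij' (fun p => fun j : Fin n => p (Fin.castLE (by omega) j))
    (fun f => fun i : Fin M => if h : i.val < n then f ⟨i.val, h⟩
      else f ⟨M - 1 - i.val, by omega⟩) ?_ ?_ ?_ ?_
  · intro p hp
    simp only [Finset.mem_filter, Finset.mem_coe, Finset.mem_univ, true_and] at hp ⊢
    have hsym : ∀ i, p i.rev = p i := fun i => congrFun hp.2 i
    have := wt_split M n hMn p hsym
    omega
  · intro f hf
    simp only [Finset.mem_filter, Finset.mem_coe, Finset.mem_univ, true_and] at hf ⊢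
    set q : Fin M → Bool := fun i : Fin M => if h : i.val < n then f ⟨i.val, h⟩
      else f ⟨M - 1 - i.val, by omega⟩ with hq
    have hsym : ∀ i, q i.rev = q i := by
      intro i
      have hv : (i.rev : ℕ) = M - (i.val + 1) := rfl
      have hi := i.isLt
      by_cases h : i.val < n
      · have h' : ¬ (i.rev : ℕ) < n := by omega
        simp only [hq, dif_neg h', dif_pos h]
        congr 1; apply Fin.ext; simp; omega
      · have h' : (i.rev : ℕ) < n := by omega
        simp only [hq, dif_pos h', dif_neg h]
        congr 1; apply Fin.ext; simp; omega
    have hrestr : ∀ (h : n ≤ M) (j : Fin n), q (Fin.castLE h j) = f j := by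
      intro h j
      have hlt : ((Fin.castLE h j) : ℕ) < n := by simp
      simp only [hq, dif_pos hlt]
      exact congrArg f (Fin.ext rfl)
    constructor
    · rw [wt_split M n hMn q hsym]
      simp only [hrestr]
      rw [hf]
    · funext i; exact hsym i
  · intro p hp
    simp only [Finset.mem_filter, Finset.mem_coe, Finset.mem_univ, true_and] at hp
    have hsym : ∀ i, p i.rev = p i := fun i => congrFun hp.2 i
    funext i
    by_cases h : i.val < n
    · simp only [dif_pos h]
      exact congrArg p (Fin.ext rfl)
    · simp only [dif_neg h]
      have : Fin.castLE (by omega : n ≤ M) ⟨M - 1 - i.val, by omega⟩ = i.rev := by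
        apply Fin.ext; simp [Fin.val_rev]; omega
      rw [this, hsym]
  · intro f hf
    funext j
    have hlt : ((Fin.castLE (by omega : n ≤ M) j) : ℕ) < n := by simp
    simp only [dif_pos hlt]
    exact congrArg f (Fin.ext rfl)

lemma wt_ARE (M n : ℕ) (hMn : M = 2 * n) (p : Fin M → Bool)
    (hp : ∀ i, (!(p i.rev)) = p i) :
    (Finset.univ.filter (fun i => p i = true)).card = n := by
  classical
  have hsplit := Finset.card_filter_add_card_filter_not
    (s := (Finset.univ : Finset (Fin M))) (p := fun i => p i = true)
  have hcardu : (Finset.univ : Finset (Fin M)).card = M := by simp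
  have hB : (Finset.univ.filter (fun i : Fin M => ¬ p i = true)).card
      = (Finset.univ.filter (fun i : Fin M => p i = true)).card := by
    refine Finset.card_nbij' (fun i => i.rev) (fun i => i.rev) ?_ ?_ ?_ ?_
    · intro a ha
      simp only [Finset.mem_filter, Finset.mem_coe, Finset.mem_univ, true_and] at ha ⊢
      have := hp a
      cases hb : p a.rev with
      | false => rw [hb] at this; simp at this; simp [this] at ha
      | true => rfl
    · intro a ha
      simp only [Finset.mem_filter, Finset.mem_coe, Finset.mem_univ, true_and] at ha ⊢
      have := hp a
      rw [ha] at this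
      cases hb : p a.rev with
      | true => rw [hb] at this; simp at this
      | false => simp [hb]
    · intro a _; exact Fin.rev_rev a
    · intro a _; exact Fin.rev_rev a
  omega

lemma card_ARE (M n : ℕ) (hMn : M = 2 * n) :
    (Finset.univ.filter (fun p : Fin M → Bool =>
      (Finset.univ.filter (fun i => p i = true)).card = n
        ∧ pinv M (prefl M p) = p)).card = 2 ^ n := by
  classical
  have h2 : ((Finset.univ : Finset (Fin n → Bool))).card = 2 ^ n := by
    simp [Finset.card_univ]
  rw [← h2]
  refine Finset.card_nbij' (fun p => fun j : Fin n => p (Fin.castLE (by omega) j))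
    (fun f => fun i : Fin M => if h : i.val < n then f ⟨i.val, h⟩
      else !(f ⟨M - 1 - i.val, by omega⟩)) ?_ ?_ ?_ ?_
  · intro p _; exact Finset.mem_univ _
  · intro f _
    simp only [Finset.mem_filter, Finset.mem_coe, Finset.mem_univ, true_and]
    set q : Fin M → Bool := fun i : Fin M => if h : i.val < n then f ⟨i.val, h⟩
      else !(f ⟨M - 1 - i.val, by omega⟩) with hq
    have hanti : ∀ i, (!(q i.rev)) = q i := by
      intro i
      have hv : (i.rev : ℕ) = M - (i.val + 1) := rfl
      have hi := i.isLt
      by_cases h : i.val < n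
      · have h' : ¬ (i.rev : ℕ) < n := by omega
        simp only [hq, dif_neg h', dif_pos h, Bool.not_not]
        congr 1; apply Fin.ext; simp; omega
      · have h' : (i.rev : ℕ) < n := by omega
        simp only [hq, dif_pos h', dif_neg h]
        congr 2; apply Fin.ext; simp; omega
    refine ⟨wt_ARE M n hMn q hanti, funext fun i => hanti i⟩
  · intro p hp
    simp only [Finset.mem_filter, Finset.mem_coe, Finset.mem_univ, true_and] at hp
    have hanti : ∀ i, (!(p i.rev)) = p i := fun i => congrFun hp.2 i
    funext i
    by_cases h : i.val < n
    · simp only [dif_pos h]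
      exact congrArg p (Fin.ext rfl)
    · simp only [dif_neg h]
      have hc : Fin.castLE (by omega : n ≤ M) ⟨M - 1 - i.val, by omega⟩ = i.rev := by
        apply Fin.ext; simp [Fin.val_rev]; omega
      rw [hc, hanti]
  · intro f _
    funext j
    have hlt : ((Fin.castLE (by omega : n ≤ M) j) : ℕ) < n := by simp
    simp only [dif_pos hlt]
    exact congrArg f (Fin.ext rfl)

lemma pinv_pinv (M : ℕ) (p : Fin M → Bool) : pinv M (pinv M p) = p :=
  funext fun i => Bool.not_not _

lemma prefl_prefl (M : ℕ) (p : Fin M → Bool) : prefl M (prefl M p) = p :=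
  funext fun i => congrArg p (Fin.rev_rev i)

lemma prefl_pinv (M : ℕ) (p : Fin M → Bool) :
    prefl M (pinv M p) = pinv M (prefl M p) := rfl

lemma pinv_inj (M : ℕ) {p q : Fin M → Bool} (h : pinv M p = pinv M q) : p = q := by
  have := congrArg (pinv M) h
  rwa [pinv_pinv, pinv_pinv] at this

lemma pinv_ne (M : ℕ) (hM : 0 < M) (p : Fin M → Bool) : pinv M p ≠ p := by
  intro h
  have := congrFun h ⟨0, hM⟩
  simp [pinv] at this

lemma wt_prefl (M : ℕ) (p : Fin M → Bool) :
    (Finset.univ.filter (fun i => prefl M p i = true)).card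
      = (Finset.univ.filter (fun i => p i = true)).card := by
  refine Finset.card_nbij' (fun i => i.rev) (fun i => i.rev) ?_ ?_ ?_ ?_
  · intro a ha
    simp only [Finset.mem_filter, Finset.mem_coe, Finset.mem_univ, true_and] at ha ⊢
    exact ha
  · intro a ha
    simp only [Finset.mem_filter, Finset.mem_coe, Finset.mem_univ, true_and] at ha ⊢
    show p a.rev.rev = true; rwa [Fin.rev_rev]
  · intro a _; exact Fin.rev_rev a
  · intro a _; exact Fin.rev_rev a

lemma wt_pinv (M : ℕ) (p : Fin M → Bool) :
    (Finset.univ.filter (fun i => pinv M p i = true)).card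
      = M - (Finset.univ.filter (fun i => p i = true)).card := by
  have hsplit := Finset.card_filter_add_card_filter_not
    (s := (Finset.univ : Finset (Fin M))) (p := fun i => p i = true)
  have hcardu : (Finset.univ : Finset (Fin M)).card = M := by simp
  have heq : Finset.univ.filter (fun i : Fin M => pinv M p i = true)
      = Finset.univ.filter (fun i : Fin M => ¬ p i = true) := by
    apply Finset.filter_congr
    intro i _
    simp [pinv]
  rw [heq]
  omega

/-!
STATEMENT 7: the number of asymmetric (ASY) patterns.

Let `4 ∣ M`.  The number of patterns `p ∈ {0,1}^M` of Hamming weight `M/2`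
satisfying neither `refl p = p` nor `inv (refl p) = p` equals
`C(M, M/2) - C(M/2, M/4) - 2^(M/2)`, and this number is divisible by 4.
-/
set_option maxHeartbeats 1000000 in
theorem number_of_ASY_patterns (M : ℕ) (hM : 4 ∣ M) :
    ((Finset.univ.filter
        (fun p : Fin M → Bool =>
          (Finset.univ.filter (fun i => p i = true)).card = M / 2)).filter
      (fun p => prefl M p ≠ p ∧ pinv M (prefl M p) ≠ p)).card
        = Nat.choose M (M / 2) - Nat.choose (M / 2) (M / 4) - 2 ^ (M / 2)
    ∧ 4 ∣ ((Finset.univ.filter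
        (fun p : Fin M → Bool =>
          (Finset.univ.filter (fun i => p i = true)).card = M / 2)).filter
      (fun p => prefl M p ≠ p ∧ pinv M (prefl M p) ≠ p)).card := by
  classical
  obtain ⟨m, rfl⟩ := hM
  rcases Nat.eq_zero_or_pos m with rfl | hm
  · have hempty : ∀ p : Fin (4 * 0) → Bool, prefl (4 * 0) p = p := by
      intro p; funext i; exact absurd i.isLt (by omega)
    have h0 : ((Finset.univ.filter
        (fun p : Fin (4 * 0) → Bool =>
          (Finset.univ.filter (fun i => p i = true)).card = 4 * 0 / 2)).filter
      (fun p => prefl (4 * 0) p ≠ p ∧ pinv (4 * 0) (prefl (4 * 0) p) ≠ p)).card = 0 := by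
      rw [Finset.card_eq_zero, Finset.filter_eq_empty_iff]
      intro p _
      simp [hempty p]
    rw [h0]
    norm_num
  · have h2 : 4 * m / 2 = 2 * m := by omega
    have h4 : 4 * m / 4 = m := by omega
    have hM0 : 0 < 4 * m := by omega
    simp only [h2, h4]
    set N := 4 * m with hN
    set W := Finset.univ.filter
      (fun p : Fin N → Bool =>
        (Finset.univ.filter (fun i => p i = true)).card = 2 * m) with hW
    set S := W.filter (fun p => prefl N p ≠ p ∧ pinv N (prefl N p) ≠ p) with hS
    -- counting part
    have hWcard : W.card = N.choose (2 * m) := card_wt N (2 * m)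
    have hRE : (W.filter (fun p => prefl N p = p)).card = (2 * m).choose m := by
      rw [hW, Finset.filter_filter]
      exact card_RE N (2 * m) m (by omega)
    have hARE : (W.filter (fun p => pinv N (prefl N p) = p)).card = 2 ^ (2 * m) := by
      rw [hW, Finset.filter_filter]
      exact card_ARE N (2 * m) (by omega)
    have hdisj : Disjoint (W.filter (fun p => prefl N p = p))
        (W.filter (fun p => pinv N (prefl N p) = p)) := by
      rw [Finset.disjoint_left]
      intro p hp1 hp2
      have e1 := (Finset.mem_filter.mp hp1).2
      have e2 := (Finset.mem_filter.mp hp2).2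
      rw [e1] at e2
      exact pinv_ne N hM0 p e2
    have hor : (W.filter (fun p => prefl N p = p ∨ pinv N (prefl N p) = p)).card
        = (2 * m).choose m + 2 ^ (2 * m) := by
      rw [Finset.filter_or, Finset.card_union_of_disjoint hdisj, hRE, hARE]
    have hsum := Finset.card_filter_add_card_filter_not
      (s := W) (p := fun p => prefl N p = p ∨ pinv N (prefl N p) = p)
    have hneg : W.filter (fun p => ¬(prefl N p = p ∨ pinv N (prefl N p) = p)) = S := by
      apply Finset.filter_congr
      intro p _
      simp only [not_or, eq_iff_iff]
    rw [hneg] at hsum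
    have hScard : S.card = N.choose (2 * m) - (2 * m).choose m - 2 ^ (2 * m) := by omega
    refine ⟨hScard, ?_⟩
    -- divisibility part
    have memS : ∀ p : Fin N → Bool, p ∈ S ↔
        (Finset.univ.filter (fun i => p i = true)).card = 2 * m
          ∧ prefl N p ≠ p ∧ pinv N (prefl N p) ≠ p := by
      intro p
      simp only [hS, hW, Finset.mem_filter, Finset.mem_univ, true_and]
    set F : (Fin N → Bool) → Finset (Fin N → Bool) :=
      fun p => {p, pinv N p, prefl N p, pinv N (prefl N p)} with hF
    have e2 : ∀ p : Fin N → Bool, prefl N (pinv N p) = pinv N (prefl N p) :=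
      fun p => prefl_pinv N p
    have e3 : ∀ p : Fin N → Bool, pinv N (prefl N (pinv N p)) = prefl N p := by
      intro p; rw [e2, pinv_pinv]
    have e5 : ∀ p : Fin N → Bool, pinv N (prefl N (prefl N p)) = pinv N p := by
      intro p; rw [prefl_prefl]
    have e6 : ∀ p : Fin N → Bool, prefl N (pinv N (prefl N p)) = pinv N p := by
      intro p; rw [e2, prefl_prefl]
    have e7 : ∀ p : Fin N → Bool, pinv N (prefl N (pinv N (prefl N p))) = p := by
      intro p; rw [e6, pinv_pinv]
    have hclosure : ∀ p ∈ S, ∀ q ∈ F p, q ∈ S := by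
      intro p hp q hq
      rw [memS] at hp
      obtain ⟨hwt, hre, hare⟩ := hp
      have hd4 : pinv N p ≠ prefl N p := by
        intro h
        apply hare
        rw [← h, pinv_pinv]
      rcases (by simpa [hF] using hq :
          q = p ∨ q = pinv N p ∨ q = prefl N p ∨ q = pinv N (prefl N p)) with
        rfl | rfl | rfl | rfl
      · rw [memS]; exact ⟨hwt, hre, hare⟩
      · rw [memS]
        refine ⟨?_, ?_, ?_⟩
        · rw [wt_pinv, hwt]; omega
        · rw [e2]; intro h; exact hre (pinv_inj N h)
        · rw [e3]; exact hd4.symm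
      · rw [memS]
        refine ⟨?_, ?_, ?_⟩
        · rw [wt_prefl]; exact hwt
        · rw [prefl_prefl]; exact hre.symm
        · rw [e5]; exact hd4
      · rw [memS]
        refine ⟨?_, ?_, ?_⟩
        · rw [wt_pinv, wt_prefl, hwt]; omega
        · rw [e6]; intro h; exact hre.symm (pinv_inj N h)
        · rw [e7]; exact hare.symm
    have hFinv : ∀ p ∈ S, ∀ q ∈ F p, F q = F p := by
      intro p _ q hq
      rcases (by simpa [hF] using hq :
          q = p ∨ q = pinv N p ∨ q = prefl N p ∨ q = pinv N (prefl N p)) with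
        rfl | rfl | rfl | rfl
      · rfl
      · ext r
        simp only [hF, pinv_pinv, prefl_prefl, e2, Finset.mem_insert,
          Finset.mem_singleton]
        tauto
      · ext r
        simp only [hF, pinv_pinv, prefl_prefl, e2, Finset.mem_insert,
          Finset.mem_singleton]
        tauto
      · ext r
        simp only [hF, pinv_pinv, prefl_prefl, e2, Finset.mem_insert,
          Finset.mem_singleton]
        tauto
    have hcard4 : ∀ p ∈ S, (F p).card = 4 := by
      intro p hp
      rw [memS] at hp
      obtain ⟨hwt, hre, hare⟩ := hp
      have d1 : p ≠ pinv N p := (pinv_ne N hM0 p).symm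
      have d2 : p ≠ prefl N p := hre.symm
      have d3 : p ≠ pinv N (prefl N p) := hare.symm
      have d4 : pinv N p ≠ prefl N p := by
        intro h; apply hare; rw [← h, pinv_pinv]
      have d5 : pinv N p ≠ pinv N (prefl N p) := by
        intro h; exact hre (pinv_inj N h).symm
      have d6 : prefl N p ≠ pinv N (prefl N p) := (pinv_ne N hM0 (prefl N p)).symm
      simp only [hF]
      rw [Finset.card_insert_of_notMem (by
        simp only [Finset.mem_insert, Finset.mem_singleton]
        push_neg
        exact ⟨d1, d2, d3⟩)]
      rw [Finset.card_insert_of_notMem (by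
        simp only [Finset.mem_insert, Finset.mem_singleton]
        push_neg
        exact ⟨d4, d5⟩)]
      rw [Finset.card_insert_of_notMem (by
        simp only [Finset.mem_singleton]
        exact d6)]
      rfl
    rw [Finset.card_eq_sum_card_fiberwise
      (f := F) (t := S.image F) (fun p hp => Finset.mem_image_of_mem F hp)]
    have hfib : ∀ o ∈ S.image F, (S.filter (fun q => F q = o)).card = 4 := by
      intro o ho
      obtain ⟨p, hpS, rfl⟩ := Finset.mem_image.mp ho
      have hset : S.filter (fun q => F q = F p) = F p := by
        apply Finset.Subset.antisymm
        · intro q hq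
          rw [Finset.mem_filter] at hq
          have hqq : q ∈ F q := by simp [hF]
          rwa [hq.2] at hqq
        · intro q hq
          rw [Finset.mem_filter]
          exact ⟨hclosure p hpS q hq, hFinv p hpS q hq⟩
      rw [hset]
      exact hcard4 p hpS
    rw [Finset.sum_congr rfl hfib, Finset.sum_const, smul_eq_mul]
    exact dvd_mul_left 4 _
end
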